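/- Let $\Xi$ be a $1$-separated subset of a geometrically doubling metric space $(\mathcal{X},d)$ with constant $N_0$. Then for every $\varepsilon > 0$ there exists a constant $C$, depending only on $\varepsilon$ and $N_0$, such that $\sup_{a \in \mathcal{X}} e^{\varepsilon d(a,\Xi)/2} \sum_{b \in \Xi} e^{-\varepsilon d(a,b)} \le C$, where $d(a,\Xi) = \inf_{b \in \Xi} d(a,b)$. -/

import Mathlib

open Metric

/-- Counting lemma: in a doubling space, a `1`-separated set meets any ball of radius
`≤ 2^k / 2` in at most `N₀ ^ k` points. -/
lemma stmt_4_count {X : Type*} [MetricSpace X] (N₀ : ℕ)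
    (hgd : ∀ (x : X) (r : ℝ), 0 < r → ∃ s : Finset X,
      s.card ≤ N₀ ∧ ball x r ⊆ ⋃ y ∈ s, ball y (r / 2))
    (Ξ : Set X) (hΞ : ∀ a ∈ Ξ, ∀ b ∈ Ξ, a ≠ b → 1 ≤ dist a b) :
    ∀ (k : ℕ) (x : X) (r : ℝ), r ≤ 2 ^ k / 2 →
      ∃ t : Finset X, t.card ≤ N₀ ^ k ∧ Ξ ∩ ball x r ⊆ ↑t := by
  classical
  intro k
  induction k with
  | zero =>
    intro x r hr
    by_cases h : (Ξ ∩ ball x r).Nonempty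
    · obtain ⟨b₀, hb₀Ξ, hb₀⟩ := h
      refine ⟨{b₀}, by simp, ?_⟩
      rintro b ⟨hbΞ, hb⟩
      simp only [Finset.coe_singleton, Set.mem_singleton_iff]
      by_contra hne
      have hsep := hΞ b hbΞ b₀ hb₀Ξ hne
      have h1 : dist b x < r := mem_ball.mp hb
      have h2 : dist b₀ x < r := mem_ball.mp hb₀
      have h3 : dist b b₀ ≤ dist b x + dist x b₀ := dist_triangle _ _ _
      rw [dist_comm x b₀] at h3
      norm_num at hr
      linarith
    · exact ⟨∅, by simp, by simp [Set.not_nonempty_iff_eq_empty.mp h]⟩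
  | succ k ih =>
    intro x r hr
    by_cases hr0 : 0 < r
    · obtain ⟨s, hs_card, hs_cov⟩ := hgd x r hr0
      have hr2 : r / 2 ≤ 2 ^ k / 2 := by
        rw [pow_succ] at hr; linarith
      choose t ht_card ht_cov using fun y : X => ih y (r / 2) hr2
      refine ⟨s.biUnion t, ?_, ?_⟩
      · calc (s.biUnion t).card ≤ ∑ y ∈ s, (t y).card := Finset.card_biUnion_le
          _ ≤ ∑ _y ∈ s, N₀ ^ k := Finset.sum_le_sum fun y _ => ht_card y
          _ = s.card * N₀ ^ k := by rw [Finset.sum_const, smul_eq_mul]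
          _ ≤ N₀ * N₀ ^ k := Nat.mul_le_mul_right _ hs_card
          _ = N₀ ^ (k + 1) := by rw [pow_succ, Nat.mul_comm]
      · rintro b ⟨hbΞ, hb⟩
        obtain ⟨y, hy, hby⟩ := Set.mem_iUnion₂.mp (hs_cov hb)
        have : b ∈ (t y : Set X) := ht_cov y ⟨hbΞ, hby⟩
        rw [Finset.coe_biUnion]
        exact Set.mem_iUnion₂.mpr ⟨y, hy, this⟩
    · refine ⟨∅, by simp, ?_⟩
      have hball : ball x r = ∅ := ball_eq_empty.mpr (le_of_not_gt hr0)
      simp [hball]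

/-- Auxiliary summability fact. -/
lemma stmt_4_summable (p : ℕ) (r : ℝ) (hr0 : 0 < r) (hr1 : r < 1) :
    Summable (fun n : ℕ => (((4 * (n + 2)) ^ p : ℕ) : ℝ) * r ^ n) := by
  have hS : Summable (fun m : ℕ => (m : ℝ) ^ p * r ^ m) :=
    summable_pow_mul_geometric_of_norm_lt_one p
      (by rwa [Real.norm_eq_abs, abs_of_pos hr0])
  have hS2 : Summable (fun n : ℕ => ((n + 2 : ℕ) : ℝ) ^ p * r ^ (n + 2)) :=
    (summable_nat_add_iff 2).mpr hS
  apply Summable.congr (hS2.mul_left ((4 : ℝ) ^ p / r ^ 2))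
  intro n
  have hrne : r ≠ 0 := ne_of_gt hr0
  have h1 : (((4 * (n + 2)) ^ p : ℕ) : ℝ) = (4 : ℝ) ^ p * ((n + 2 : ℕ) : ℝ) ^ p := by
    push_cast
    rw [mul_pow]
  rw [h1, pow_add]
  rw [div_mul_eq_mul_div, div_eq_iff (pow_ne_zero 2 hrne)]
  ring

/-- For a `1`-separated set `Ξ` in a geometrically doubling metric space and any `ε > 0`,
`e^{ε d(a,Ξ)/2} ∑_{b ∈ Ξ} e^{-ε d(a,b)}` is bounded uniformly in `a`. -/
theorem stmt_4 {X : Type*} [MetricSpace X] (N₀ : ℕ) (hN₀ : 0 < N₀)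
    (hgd : ∀ (x : X) (r : ℝ), 0 < r → ∃ s : Finset X,
      s.card ≤ N₀ ∧ ball x r ⊆ ⋃ y ∈ s, ball y (r / 2))
    (Ξ : Set X) (hΞ : ∀ a ∈ Ξ, ∀ b ∈ Ξ, a ≠ b → 1 ≤ dist a b)
    (ε : ℝ) (hε : 0 < ε) :
    ∃ C : ℝ, 0 < C ∧ ∀ a : X,
      ENNReal.ofReal (Real.exp (ε * Metric.infDist a Ξ / 2)) *
        ∑' b : Ξ, ENNReal.ofReal (Real.exp (-(ε * dist a (b : X)))) ≤
        ENNReal.ofReal C := by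
  classical
  obtain ⟨p, r, M, hr0, hr1, hrval, hMval, hF⟩ :
      ∃ (p : ℕ) (r : ℝ) (M : ℕ → ℕ), 0 < r ∧ r < 1 ∧ r = Real.exp (-(ε / 2)) ∧
        ((M = fun n => (4 * (n + 2)) ^ p) ∧ N₀ ≤ 2 ^ p) ∧
        Summable (fun n : ℕ => ((M n : ℕ) : ℝ) * r ^ n) := by
    refine ⟨Nat.clog 2 N₀, Real.exp (-(ε / 2)), fun n => (4 * (n + 2)) ^ (Nat.clog 2 N₀),
      Real.exp_pos _, Real.exp_lt_one_iff.mpr (by linarith), rfl,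
      ⟨rfl, Nat.le_pow_clog one_lt_two N₀⟩, ?_⟩
    exact stmt_4_summable _ _ (Real.exp_pos _) (Real.exp_lt_one_iff.mpr (by linarith))
  obtain ⟨hMdef, hNp⟩ := hMval
  set C₀ : ℝ := ∑' n : ℕ, ((M n : ℕ) : ℝ) * r ^ n with hC₀
  have hC₀0 : 0 ≤ C₀ := tsum_nonneg fun n => by positivity
  refine ⟨C₀ + 1, by linarith, ?_⟩
  intro a
  -- counting: points of Ξ in ball a (n+2)
  have count : ∀ n : ℕ, ∃ t : Finset X, t.card ≤ M n ∧
      Ξ ∩ ball a ((n : ℝ) + 2) ⊆ ↑t := by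
    intro n
    set kn := Nat.clog 2 (2 * (n + 2)) with hkn
    have hle : ((n : ℝ) + 2) ≤ 2 ^ kn / 2 := by
      have h1 : 2 * (n + 2) ≤ 2 ^ kn := Nat.le_pow_clog one_lt_two _
      have h2 : ((2 * (n + 2) : ℕ) : ℝ) ≤ ((2 ^ kn : ℕ) : ℝ) := Nat.cast_le.mpr h1
      push_cast at h2
      linarith
    obtain ⟨t, htc, hts⟩ := stmt_4_count N₀ hgd Ξ hΞ kn a ((n : ℝ) + 2) hle
    refine ⟨t, le_trans htc ?_, hts⟩
    have hk1 : 0 < kn := Nat.clog_pos one_lt_two (by omega)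
    have h3 : 2 ^ (kn - 1) < 2 * (n + 2) :=
      Nat.pow_pred_clog_lt_self one_lt_two (x := 2 * (n + 2)) (by omega)
    have h2 : 2 ^ kn ≤ 4 * (n + 2) := by
      have he : kn - 1 + 1 = kn := Nat.succ_pred_eq_of_pos hk1
      have h4 : (2 : ℕ) ^ kn = 2 ^ (kn - 1) * 2 := by rw [← pow_succ, he]
      omega
    rw [hMdef]
    calc N₀ ^ kn ≤ (2 ^ p) ^ kn := Nat.pow_le_pow_left hNp kn
      _ = (2 ^ kn) ^ p := by rw [← pow_mul, ← pow_mul, Nat.mul_comm]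
      _ ≤ (4 * (n + 2)) ^ p := Nat.pow_le_pow_left h2 p
  choose t htc hts using count
  set φ : Ξ → ℕ := fun b => ⌊dist a (b : X)⌋₊ with hφ
  set f : Ξ → ENNReal := fun b => ENNReal.ofReal (Real.exp (-(ε / 2 * dist a (b : X)))) with hf
  have hmem : ∀ (n : ℕ) (b : Ξ), φ b = n → (b : X) ∈ t n := by
    intro n b hb
    apply hts n
    refine ⟨b.2, ?_⟩
    rw [mem_ball, dist_comm]
    have h1 : dist a (b : X) < (n : ℝ) + 1 := by
      rw [← hb]; exact Nat.lt_floor_add_one _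
    linarith
  have hinj : ∀ n : ℕ, Function.Injective
      (fun b : {b : Ξ // φ b = n} => (⟨(b.1 : X), hmem n b.1 b.2⟩ : (t n : Finset X))) := by
    intro n b c h
    have h' : ((b.1 : Ξ) : X) = ((c.1 : Ξ) : X) := by simpa using h
    exact Subtype.ext (Subtype.ext h')
  haveI hfin : ∀ n : ℕ, Finite {b : Ξ // φ b = n} :=
    fun n => Finite.of_injective _ (hinj n)
  have hcard : ∀ n : ℕ, Nat.card {b : Ξ // φ b = n} ≤ M n := by
    intro n
    have h1 := Nat.card_le_card_of_injective _ (hinj n)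
    have h2 : Nat.card (t n) = (t n).card := Nat.card_eq_finsetCard _
    have h3 := htc n
    omega
  have hfib : ∀ n : ℕ, (∑' b : {b : Ξ // φ b = n}, f b.1) ≤
      ENNReal.ofReal (((M n : ℕ) : ℝ) * r ^ n) := by
    intro n
    haveI : Fintype {b : Ξ // φ b = n} := Fintype.ofFinite _
    rw [tsum_fintype]
    have hterm : ∀ b : {b : Ξ // φ b = n}, f b.1 ≤ ENNReal.ofReal (r ^ n) := by
      intro b
      apply ENNReal.ofReal_le_ofReal
      rw [hrval, ← Real.exp_nat_mul]
      apply Real.exp_le_exp.mpr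
      have hd : (n : ℝ) ≤ dist a (b.1 : X) := by
        conv_lhs => rw [← b.2]
        exact Nat.floor_le dist_nonneg
      nlinarith [hε.le]
    calc (∑ b : {b : Ξ // φ b = n}, f b.1)
        ≤ Fintype.card {b : Ξ // φ b = n} • ENNReal.ofReal (r ^ n) :=
          Finset.sum_le_card_nsmul _ _ _ (fun b _ => hterm b)
      _ = (Fintype.card {b : Ξ // φ b = n} : ENNReal) * ENNReal.ofReal (r ^ n) :=
          nsmul_eq_mul _ _
      _ ≤ ((M n : ℕ) : ENNReal) * ENNReal.ofReal (r ^ n) := by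
          gcongr
          have h5 : Fintype.card {b : Ξ // φ b = n} = Nat.card {b : Ξ // φ b = n} :=
            (Nat.card_eq_fintype_card).symm
          exact_mod_cast h5 ▸ hcard n
      _ = ENNReal.ofReal (((M n : ℕ) : ℝ) * r ^ n) := by
          rw [ENNReal.ofReal_mul (by positivity), ENNReal.ofReal_natCast]
  have key : (∑' b : Ξ, f b) ≤ ENNReal.ofReal C₀ := by
    have h1 : ∑' b : Ξ, f b = ∑' x : Σ n : ℕ, {b : Ξ // φ b = n},
        f ((Equiv.sigmaFiberEquiv φ) x) := ((Equiv.sigmaFiberEquiv φ).tsum_eq f).symm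
    rw [h1, ENNReal.tsum_sigma']
    have h2 : ∀ n : ℕ, (∑' b : {b : Ξ // φ b = n}, f ((Equiv.sigmaFiberEquiv φ) ⟨n, b⟩)) ≤
        ENNReal.ofReal (((M n : ℕ) : ℝ) * r ^ n) := fun n => hfib n
    calc (∑' n : ℕ, ∑' b : {b : Ξ // φ b = n}, f ((Equiv.sigmaFiberEquiv φ) ⟨n, b⟩))
        ≤ ∑' n : ℕ, ENNReal.ofReal (((M n : ℕ) : ℝ) * r ^ n) := ENNReal.tsum_le_tsum h2
      _ = ENNReal.ofReal C₀ :=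
          (ENNReal.ofReal_tsum_of_nonneg (fun n => by positivity) hF).symm
  have hD : ∀ b : Ξ, Metric.infDist a Ξ ≤ dist a (b : X) :=
    fun b => Metric.infDist_le_dist_of_mem b.2
  calc ENNReal.ofReal (Real.exp (ε * Metric.infDist a Ξ / 2)) *
        ∑' b : Ξ, ENNReal.ofReal (Real.exp (-(ε * dist a (b : X))))
      = ∑' b : Ξ, ENNReal.ofReal (Real.exp (ε * Metric.infDist a Ξ / 2)) *
          ENNReal.ofReal (Real.exp (-(ε * dist a (b : X)))) := ENNReal.tsum_mul_left.symm
    _ ≤ ∑' b : Ξ, f b := by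
        apply ENNReal.tsum_le_tsum
        intro b
        rw [← ENNReal.ofReal_mul (Real.exp_nonneg _), ← Real.exp_add]
        apply ENNReal.ofReal_le_ofReal
        apply Real.exp_le_exp.mpr
        have h6 := hD b
        nlinarith [hε.le]
    _ ≤ ENNReal.ofReal C₀ := key
    _ ≤ ENNReal.ofReal (C₀ + 1) := ENNReal.ofReal_le_ofReal (by linarith)
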